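/- arXiv:1805.12317 — 9 statements merged into one kernel-verified Lean document; each statement's English description precedes it below -/
import Mathlib

section
/- Let S ⊆ X be measurable with D(S) ≥ γ for some γ > 0, and define ŷ_S : X → [-1,1] by ŷ_S(x) = (1 - 2·y(x)) for x ∈ S and ŷ_S(x) = 0 otherwise. Suppose the measurable hypothesis f : X → [0,1] is (C,α)-multiaccurate and there exists c ∈ C with E[|c(x) - ŷ_S(x)|] ≤ τ. Then the classification error of f on S satisfies er_S(f;y) ≤ 2·(α + τ)/γ. -/
open MeasureTheory ProbabilityTheory

/-- Multiaccuracy implies small classification error on an approximately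
identifiable subpopulation (Proposition 1 of the paper). -/
theorem multiaccuracy_classification_error
    {X : Type*} [MeasurableSpace X] (D : Measure X) [IsProbabilityMeasure D]
    (y f : X → ℝ) (hy : Measurable y) (hy01 : ∀ x, y x = 0 ∨ y x = 1)
    (hf : Measurable f) (hf01 : ∀ x, f x ∈ Set.Icc (0 : ℝ) 1)
    (C : Set (X → ℝ)) (hC : ∀ c ∈ C, Measurable c ∧ ∀ x, c x ∈ Set.Icc (-1 : ℝ) 1)
    (α τ γ : ℝ) (hα : 0 ≤ α) (hτ : 0 ≤ τ) (hγ : 0 < γ)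
    (S : Set X) (hS : MeasurableSet S) (hSγ : γ ≤ (D S).toReal)
    (hMA : ∀ c ∈ C, ∫ x, c x * (f x - y x) ∂D ≤ α)
    (hc : ∃ c ∈ C, ∫ x, |c x - S.indicator (fun x => 1 - 2 * y x) x| ∂D ≤ τ) :
    ((D[|S]) {x | (if f x > 1/2 then (1 : ℝ) else 0) ≠ y x}).toReal
      ≤ 2 * (α + τ) / γ := by
  obtain ⟨c, hcC, hcτ⟩ := hc
  obtain ⟨hcm, hc01⟩ := hC c hcC
  set yh : X → ℝ := S.indicator (fun x => 1 - 2 * y x) with hyh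
  set E : Set X := {x | (if f x > 1/2 then (1 : ℝ) else 0) ≠ y x} with hE
  have hEm : MeasurableSet E := by
    have h1 : Measurable (fun x => if f x > 1/2 then (1 : ℝ) else 0) :=
      Measurable.ite (measurableSet_lt measurable_const hf) measurable_const measurable_const
    exact (measurableSet_eq_fun h1 hy).compl
  have hym : Measurable yh :=
    (measurable_const.sub (measurable_const.mul hy)).indicator hS
  have hfy : Measurable (fun x => f x - y x) := hf.sub hy
  have hbfy : ∀ x, |f x - y x| ≤ 1 := by
    intro x
    obtain ⟨h0, h1⟩ := hf01 x
    rcases hy01 x with h | h <;> rw [abs_le] <;> constructor <;> linarith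
  have hbyh : ∀ x, |yh x| ≤ 1 := by
    intro x
    rw [hyh]
    by_cases hx : x ∈ S
    · rw [Set.indicator_of_mem hx]
      rcases hy01 x with h | h <;> rw [h] <;> norm_num
    · rw [Set.indicator_of_notMem hx]; norm_num
  have hbdd : ∀ (M : ℝ) (g : X → ℝ), Measurable g → (∀ x, |g x| ≤ M) → Integrable g D := by
    intro M g hg hb
    exact (integrable_const (M : ℝ)).mono' hg.aestronglyMeasurable
      (Filter.Eventually.of_forall fun x => by simpa [Real.norm_eq_abs] using hb x)
  have int1 : Integrable (fun x => yh x * (f x - y x)) D := by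
    refine hbdd 1 _ (hym.mul hfy) fun x => ?_
    rw [abs_mul]
    calc |yh x| * |f x - y x| ≤ 1 * 1 :=
          mul_le_mul (hbyh x) (hbfy x) (abs_nonneg _) zero_le_one
      _ = 1 := one_mul 1
  have int2 : Integrable (fun x => c x * (f x - y x)) D := by
    refine hbdd 1 _ (hcm.mul hfy) fun x => ?_
    rw [abs_mul]
    have hcb : |c x| ≤ 1 := abs_le.mpr ⟨(hc01 x).1, (hc01 x).2⟩
    calc |c x| * |f x - y x| ≤ 1 * 1 :=
          mul_le_mul hcb (hbfy x) (abs_nonneg _) zero_le_one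
      _ = 1 := one_mul 1
  have int3 : Integrable (fun x => |c x - yh x|) D := by
    refine hbdd 2 _ (hcm.sub hym).abs fun x => ?_
    rw [abs_abs]
    have hcb : |c x| ≤ 1 := abs_le.mpr ⟨(hc01 x).1, (hc01 x).2⟩
    calc |c x - yh x| ≤ |c x| + |yh x| := abs_sub _ _
      _ ≤ 1 + 1 := add_le_add hcb (hbyh x)
      _ ≤ 2 := by norm_num
  -- upper bound on the correlation integral
  have key : ∫ x, yh x * (f x - y x) ∂D ≤ α + τ := by
    have h1 : ∀ x, yh x * (f x - y x) ≤ c x * (f x - y x) + |c x - yh x| := by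
      intro x
      have h2 : (yh x - c x) * (f x - y x) ≤ |c x - yh x| := by
        calc (yh x - c x) * (f x - y x) ≤ |(yh x - c x) * (f x - y x)| := le_abs_self _
          _ = |yh x - c x| * |f x - y x| := abs_mul _ _
          _ ≤ |yh x - c x| * 1 :=
              mul_le_mul_of_nonneg_left (hbfy x) (abs_nonneg _)
          _ = |c x - yh x| := by rw [mul_one, abs_sub_comm]
      nlinarith [h2]
    calc ∫ x, yh x * (f x - y x) ∂D
        ≤ ∫ x, (c x * (f x - y x) + |c x - yh x|) ∂D :=
          integral_mono int1 (int2.add int3) h1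
      _ = (∫ x, c x * (f x - y x) ∂D) + ∫ x, |c x - yh x| ∂D :=
          integral_add int2 int3
      _ ≤ α + τ := add_le_add (hMA c hcC) hcτ
  -- lower bound via the error set
  have hpt : ∀ x, (S ∩ E).indicator (fun _ => (1/2 : ℝ)) x ≤ yh x * (f x - y x) := by
    intro x
    obtain ⟨hf0, hf1⟩ := hf01 x
    by_cases hxS : x ∈ S
    · have hyhx : yh x = 1 - 2 * y x := Set.indicator_of_mem hxS _
      by_cases hxE : x ∈ E
      · rw [Set.indicator_of_mem (Set.mem_inter hxS hxE)]
        have hxE' : (if f x > 1/2 then (1 : ℝ) else 0) ≠ y x := hxE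
        rcases hy01 x with h | h <;> rw [hyhx, h] <;> rw [h] at hxE'
        · by_cases hfc : f x > 1/2
          · nlinarith
          · simp [hfc] at hxE'; linarith
        · by_cases hfc : f x > 1/2
          · simp [hfc] at hxE'; nlinarith
          · push_neg at hfc; nlinarith
      · rw [Set.indicator_of_notMem (fun h => hxE h.2)]
        rcases hy01 x with h | h <;> rw [hyhx, h] <;> nlinarith
    · rw [Set.indicator_of_notMem (fun h => hxS h.1), hyh,
        Set.indicator_of_notMem hxS, zero_mul]
  have hSE : MeasurableSet (S ∩ E) := hS.inter hEm
  have hlow : (D (S ∩ E)).toReal * (1/2) ≤ ∫ x, yh x * (f x - y x) ∂D := by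
    have := integral_indicator_const (1/2 : ℝ) hSE (μ := D)
    calc (D (S ∩ E)).toReal * (1/2)
        = ∫ x, (S ∩ E).indicator (fun _ => (1/2 : ℝ)) x ∂D := by
          rw [integral_indicator_const (1/2 : ℝ) hSE]; simp [smul_eq_mul, Measure.real]
      _ ≤ ∫ x, yh x * (f x - y x) ∂D := by
          refine integral_mono ?_ int1 hpt
          exact (integrable_const _).indicator hSE
  have hDSE : (D (S ∩ E)).toReal ≤ 2 * (α + τ) := by linarith
  -- conditional probability
  have hScond : (D[|S]) E = (D S)⁻¹ * D (S ∩ E) := cond_apply hS D E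
  have hDSfin : D S ≠ ⊤ := measure_ne_top D S
  have hDSEfin : D (S ∩ E) ≠ ⊤ := measure_ne_top D _
  rw [hScond, ENNReal.toReal_mul, ENNReal.toReal_inv]
  have hDSpos : 0 < (D S).toReal := lt_of_lt_of_le hγ hSγ
  calc ((D S).toReal)⁻¹ * (D (S ∩ E)).toReal
      ≤ γ⁻¹ * (2 * (α + τ)) := by
        refine mul_le_mul ?_ hDSE ENNReal.toReal_nonneg (by positivity)
        exact inv_anti₀ hγ hSγ
    _ = 2 * (α + τ) / γ := by field_simp
end

section
/- For every measurable set S ⊆ X and every measurable hypothesis f : X → [0,1], the expectation E[(1 - 2·y(x))·1_S(x)·(f(x) - y(x))] is at least (1/2)·D({x ∈ S : f̄(x) ≠ y(x)}). -/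
open MeasureTheory ProbabilityTheory

/-- The signed residual correlated with `(1 - 2y)·1_S` is at least half the mass
of the misclassified points in `S`. -/
theorem residual_correlation_lower_bound
    {X : Type*} [MeasurableSpace X] (D : Measure X) [IsProbabilityMeasure D]
    (y f : X → ℝ) (hy : Measurable y) (hy01 : ∀ x, y x = 0 ∨ y x = 1)
    (hf : Measurable f) (hf01 : ∀ x, f x ∈ Set.Icc (0 : ℝ) 1)
    (S : Set X) (hS : MeasurableSet S) :
    ∫ x, (1 - 2 * y x) * S.indicator (fun _ => (1 : ℝ)) x * (f x - y x) ∂D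
      ≥ (1/2) * (D {x | x ∈ S ∧ (if f x > 1/2 then (1 : ℝ) else 0) ≠ y x}).toReal := by
  classical
  set T : Set X := {x | x ∈ S ∧ (if f x > 1/2 then (1 : ℝ) else 0) ≠ y x} with hTdef
  have hmeas_if : Measurable (fun x => if f x > 1/2 then (1 : ℝ) else 0) :=
    Measurable.ite (measurableSet_lt measurable_const hf) measurable_const measurable_const
  have hT : MeasurableSet T := by
    have hEq : T = S ∩ {x | (if f x > 1/2 then (1 : ℝ) else 0) = y x}ᶜ := by
      ext x; simp [hTdef]
    rw [hEq]
    exact hS.inter (measurableSet_eq_fun hmeas_if hy).compl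
  have hpt : ∀ x, T.indicator (fun _ => (1/2 : ℝ)) x
      ≤ (1 - 2 * y x) * S.indicator (fun _ => (1 : ℝ)) x * (f x - y x) := by
    intro x
    obtain ⟨hf0, hf1⟩ := hf01 x
    by_cases hxS : x ∈ S
    · rcases hy01 x with hy0 | hy1
      · by_cases hfc : f x > 1/2
        · have hxT : x ∈ T := ⟨hxS, by rw [if_pos hfc, hy0]; norm_num⟩
          simp only [Set.indicator_of_mem hxT, Set.indicator_of_mem hxS, hy0]
          linarith
        · have hxT : x ∉ T := fun h => h.2 (by rw [if_neg hfc, hy0])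
          simp only [Set.indicator_of_notMem hxT, Set.indicator_of_mem hxS, hy0]
          linarith
      · by_cases hfc : f x > 1/2
        · have hxT : x ∉ T := fun h => h.2 (by rw [if_pos hfc, hy1])
          simp only [Set.indicator_of_notMem hxT, Set.indicator_of_mem hxS, hy1]
          nlinarith
        · have hxT : x ∈ T := ⟨hxS, by rw [if_neg hfc, hy1]; norm_num⟩
          simp only [Set.indicator_of_mem hxT, Set.indicator_of_mem hxS, hy1]
          nlinarith
    · have hxT : x ∉ T := by simp [hTdef, hxS]
      simp [Set.indicator_of_notMem hxT, Set.indicator_of_notMem hxS]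
  have hint₁ : Integrable (T.indicator (fun _ => (1/2 : ℝ))) D :=
    (integrable_const _).indicator hT
  have hmeasg : Measurable
      (fun x => (1 - 2 * y x) * S.indicator (fun _ => (1 : ℝ)) x * (f x - y x)) := by
    exact ((measurable_const.sub (hy.const_mul 2)).mul
      (measurable_const.indicator hS)).mul (hf.sub hy)
  have hint₂ : Integrable
      (fun x => (1 - 2 * y x) * S.indicator (fun _ => (1 : ℝ)) x * (f x - y x)) D := by
    apply Integrable.mono' (integrable_const (1 : ℝ)) hmeasg.aestronglyMeasurable
    filter_upwards with x
    obtain ⟨hf0, hf1⟩ := hf01 x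
    have h1 : |1 - 2 * y x| ≤ 1 := by
      rw [abs_le]; rcases hy01 x with h | h <;> rw [h] <;> norm_num
    have h2 : |S.indicator (fun _ => (1 : ℝ)) x| ≤ 1 := by
      by_cases h : x ∈ S <;> simp [h]
    have h3 : |f x - y x| ≤ 1 := by
      rw [abs_le]; rcases hy01 x with h | h <;> rw [h] <;> constructor <;> linarith
    have habs : |(1 - 2 * y x) * S.indicator (fun _ => (1 : ℝ)) x * (f x - y x)| ≤ 1 := by
      rw [abs_mul, abs_mul]
      calc |1 - 2 * y x| * |S.indicator (fun _ => (1:ℝ)) x| * |f x - y x|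
          ≤ 1 * 1 * 1 := by
            gcongr <;> first | exact h1 | exact h2 | exact h3 | positivity
        _ = 1 := by ring
    simpa only [Real.norm_eq_abs] using habs
  have hmono := integral_mono hint₁ hint₂ hpt
  rw [integral_indicator_const _ hT, smul_eq_mul] at hmono
  rw [measureReal_def] at hmono
  rw [ge_iff_le]
  linarith
end

section
/- Let S ⊆ X be measurable with D(S) ≥ γ for some γ > 0, and suppose the function x ↦ (1 - 2·y(x))·1_S(x) belongs to the class C. If the measurable hypothesis f : X → [0,1] is (C,α)-multiaccurate, then the classification error of f on S satisfies er_S(f;y) ≤ 2·α/γ. -/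
open MeasureTheory ProbabilityTheory

/-- If the test `(1 - 2y)·1_S` belongs to the class `C`, then any
`(C,α)`-multiaccurate hypothesis has classification error at most `2α/γ` on `S`. -/
theorem multiaccuracy_exact_test_classification_error
    {X : Type*} [MeasurableSpace X] (D : Measure X) [IsProbabilityMeasure D]
    (y f : X → ℝ) (hy : Measurable y) (hy01 : ∀ x, y x = 0 ∨ y x = 1)
    (hf : Measurable f) (hf01 : ∀ x, f x ∈ Set.Icc (0 : ℝ) 1)
    (C : Set (X → ℝ)) (hC : ∀ c ∈ C, Measurable c ∧ ∀ x, c x ∈ Set.Icc (-1 : ℝ) 1)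
    (α γ : ℝ) (hα : 0 ≤ α) (hγ : 0 < γ)
    (S : Set X) (hS : MeasurableSet S) (hSγ : γ ≤ (D S).toReal)
    (hmem : (fun x => (1 - 2 * y x) * S.indicator (fun _ => (1 : ℝ)) x) ∈ C)
    (hMA : ∀ c ∈ C, ∫ x, c x * (f x - y x) ∂D ≤ α) :
    ((D[|S]) {x | (if f x > 1/2 then (1 : ℝ) else 0) ≠ y x}).toReal ≤ 2 * α / γ := by
  set E : Set X := {x | (if f x > 1/2 then (1 : ℝ) else 0) ≠ y x} with hE
  have hEmeas : MeasurableSet E := by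
    have h1 : Measurable (fun x => (if f x > 1/2 then (1 : ℝ) else 0) - y x) :=
      (Measurable.ite (measurableSet_lt measurable_const hf) measurable_const
        measurable_const).sub hy
    have : E = (fun x => (if f x > 1/2 then (1 : ℝ) else 0) - y x) ⁻¹' ({0}ᶜ) := by
      ext x; simp [hE, sub_eq_zero]
    rw [this]
    exact h1 (measurableSet_singleton (0:ℝ)).compl
  have hg : ∀ x, ((S ∩ E).indicator (fun _ => (1:ℝ)) x) * (1/2)
      ≤ (1 - 2 * y x) * S.indicator (fun _ => (1 : ℝ)) x * (f x - y x) := by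
    intro x
    by_cases hxS : x ∈ S
    · by_cases hxE : x ∈ E
      · have hmem' : x ∈ S ∩ E := ⟨hxS, hxE⟩
        simp only [Set.indicator_of_mem hxS, Set.indicator_of_mem hmem']
        rcases hf01 x with ⟨h0, h1⟩
        rcases hy01 x with hy0 | hy1
        · have : f x > 1/2 := by
            by_contra h
            exact hxE (by simp only [hE, Set.mem_setOf_eq, ne_eq, not_not, hy0, if_neg h])
          rw [hy0]; nlinarith
        · have : ¬ (f x > 1/2) := by
            intro h
            exact hxE (by simp only [hE, Set.mem_setOf_eq, ne_eq, not_not, hy1, if_pos h])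
          rw [hy1]; push_neg at this; nlinarith
      · have hnm : x ∉ S ∩ E := fun h => hxE h.2
        simp only [Set.indicator_of_mem hxS, Set.indicator_of_notMem hnm]
        rcases hf01 x with ⟨h0, h1⟩
        rcases hy01 x with h2 | h2 <;> rw [h2] <;> nlinarith
    · have hnm : x ∉ S ∩ E := fun h => hxS h.1
      simp [Set.indicator_of_notMem hxS, Set.indicator_of_notMem hnm]
  have hcmeas : Measurable (fun x => (1 - 2 * y x) * S.indicator (fun _ => (1 : ℝ)) x) :=
    ((measurable_const.sub (hy.const_mul 2))).mul
      (measurable_const.indicator hS)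
  have hgmeas : Measurable (fun x => (1 - 2 * y x) * S.indicator (fun _ => (1 : ℝ)) x * (f x - y x)) :=
    hcmeas.mul (hf.sub hy)
  have hgint : Integrable (fun x => (1 - 2 * y x) * S.indicator (fun _ => (1 : ℝ)) x * (f x - y x)) D := by
    apply Integrable.mono' (integrable_const (3:ℝ)) hgmeas.aestronglyMeasurable
    filter_upwards with x
    rcases hf01 x with ⟨h0, h1⟩
    have hind : S.indicator (fun _ => (1:ℝ)) x = 0 ∨ S.indicator (fun _ => (1:ℝ)) x = 1 := by
      by_cases h : x ∈ S <;> simp [h]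
    rw [Real.norm_eq_abs, abs_le]
    rcases hy01 x with h2 | h2 <;> rcases hind with hi | hi <;>
      rw [h2, hi] <;> constructor <;> nlinarith
  have hiint : Integrable (fun x => ((S ∩ E).indicator (fun _ => (1:ℝ)) x) * (1/2)) D := by
    apply Integrable.mul_const
    exact (integrable_const (1:ℝ)).indicator (hS.inter hEmeas)
  have hint_mono : ∫ x, ((S ∩ E).indicator (fun _ => (1:ℝ)) x) * (1/2) ∂D
      ≤ ∫ x, (1 - 2 * y x) * S.indicator (fun _ => (1 : ℝ)) x * (f x - y x) ∂D :=
    integral_mono hiint hgint hg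
  have hind_int : ∫ x, ((S ∩ E).indicator (fun _ => (1:ℝ)) x) * (1/2) ∂D
      = (D (S ∩ E)).toReal * (1/2) := by
    rw [integral_mul_const]
    congr 1
    exact integral_indicator_one (μ := D) (hS.inter hEmeas)
  have hkey : (D (S ∩ E)).toReal ≤ 2 * α := by
    have := le_trans hint_mono (hMA _ hmem)
    rw [hind_int] at this
    linarith
  have hDSpos : 0 < (D S).toReal := lt_of_lt_of_le hγ hSγ
  have hDSne : D S ≠ 0 := by
    intro h; rw [h] at hDSpos; simp at hDSpos
  rw [cond_apply hS]
  rw [ENNReal.toReal_mul, ENNReal.toReal_inv]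
  have hnn : 0 ≤ (D (S ∩ E)).toReal := ENNReal.toReal_nonneg
  rw [inv_mul_eq_div]
  exact div_le_div₀ (by positivity) hkey hγ hSγ
end

section
/- (Do-no-harm.) Let α, β, γ > 0 with α ≤ β·γ, let f_0, f : X → [0,1] be measurable hypotheses, and let S ⊆ X be measurable with D(S) ≥ γ. Set S_1 = {x ∈ S : f_0(x) > 1/2} and S_0 = S \ S_1. Suppose E[1_{S_1}(x)·(y(x) - f(x))] ≤ α and E[1_{S_0}(x)·(f(x) - y(x))] ≤ α. Then the classification error of f on S satisfies er_S(f;y) ≤ 3·er_S(f_0;y) + 4·β. -/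
open MeasureTheory ProbabilityTheory

lemma dnh_aux {X : Type*} [MeasurableSpace X] (μ : Measure X)
    [IsProbabilityMeasure μ] (h : X → ℝ) (hm : Measurable h)
    (hbd : ∀ x, |h x| ≤ 1)
    (U A B : Set X) (hUm : MeasurableSet U) (hAm : MeasurableSet A) (hBm : MeasurableSet B)
    (hhA : ∀ x ∈ A, 1/2 ≤ h x) (hhB : ∀ x ∈ B, -1 ≤ h x)
    (hh0 : ∀ x ∈ U, x ∉ A → x ∉ B → 0 ≤ h x)
    (hAU : A ⊆ U) (hBU : B ⊆ U)
    (α : ℝ) (hint : ∫ x, U.indicator (fun _ => (1:ℝ)) x * h x ∂μ ≤ α) :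
    (1/2) * (μ A).toReal - (μ B).toReal ≤ α := by
  set g : X → ℝ := fun x => A.indicator (fun _ => (1/2:ℝ)) x - B.indicator (fun _ => (1:ℝ)) x with hg
  have hintA : Integrable (A.indicator (fun _ => (1/2:ℝ))) μ :=
    (integrable_const _).indicator hAm
  have hintB : Integrable (B.indicator (fun _ => (1:ℝ))) μ :=
    (integrable_const _).indicator hBm
  have hgint : Integrable g μ := hintA.sub hintB
  have hFint : Integrable (fun x => U.indicator (fun _ => (1:ℝ)) x * h x) μ := by
    refine Integrable.mono' (integrable_const (1:ℝ))
      (((measurable_const.indicator hUm).mul hm).aestronglyMeasurable) ?_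
    filter_upwards with x
    by_cases hx : x ∈ U
    · simp [Set.indicator_of_mem hx, abs_le.mp (hbd x), hbd x]
    · simp [Set.indicator_of_notMem hx]
  have hle : ∀ x, g x ≤ U.indicator (fun _ => (1:ℝ)) x * h x := by
    intro x
    by_cases hxA : x ∈ A
    · have : U.indicator (fun _ => (1:ℝ)) x * h x = h x := by
        simp [Set.indicator_of_mem (hAU hxA)]
      rw [this, hg]
      have h2 := hhA x hxA
      by_cases hxB : x ∈ B <;>
        simp [Set.indicator_of_mem hxA, hxB] <;> linarith
    · by_cases hxB : x ∈ B
      · have : U.indicator (fun _ => (1:ℝ)) x * h x = h x := by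
          simp [Set.indicator_of_mem (hBU hxB)]
        rw [this, hg]
        have := hhB x hxB
        simp [Set.indicator_of_notMem hxA, Set.indicator_of_mem hxB]
        linarith
      · simp only [hg, Set.indicator_of_notMem hxA, Set.indicator_of_notMem hxB, sub_zero,
          sub_self]
        by_cases hxU : x ∈ U
        · have := hh0 x hxU hxA hxB
          simp [Set.indicator_of_mem hxU]
          linarith
        · simp [Set.indicator_of_notMem hxU]
  have hmono : ∫ x, g x ∂μ ≤ ∫ x, U.indicator (fun _ => (1:ℝ)) x * h x ∂μ :=
    integral_mono hgint hFint hle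
  have hgval : ∫ x, g x ∂μ = (1/2) * (μ A).toReal - (μ B).toReal := by
    rw [hg]
    rw [integral_sub hintA hintB, integral_indicator_const _ hAm, integral_indicator_const _ hBm]
    simp [mul_comm, measureReal_def]
  linarith

/-- Do-no-harm (Theorem 2 of the paper): if the post-processed hypothesis `f`
passes the auditing tests given by the indicators of `S₁` and `S₀`, then its
classification error on `S` is at most `3·er_S(f₀) + 4β`. -/
theorem do_no_harm
    {X : Type*} [MeasurableSpace X] (D : Measure X) [IsProbabilityMeasure D]
    (y f₀ f : X → ℝ) (hy : Measurable y) (hy01 : ∀ x, y x = 0 ∨ y x = 1)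
    (hf₀ : Measurable f₀) (hf₀01 : ∀ x, f₀ x ∈ Set.Icc (0 : ℝ) 1)
    (hf : Measurable f) (hf01 : ∀ x, f x ∈ Set.Icc (0 : ℝ) 1)
    (α β γ : ℝ) (hα : 0 < α) (hβ : 0 < β) (hγ : 0 < γ) (hαβγ : α ≤ β * γ)
    (S : Set X) (hS : MeasurableSet S) (hSγ : γ ≤ (D S).toReal)
    (S₁ S₀ : Set X)
    (hS₁ : S₁ = {x | x ∈ S ∧ f₀ x > 1/2}) (hS₀ : S₀ = S \ S₁)
    (haudit₁ : ∫ x, S₁.indicator (fun _ => (1 : ℝ)) x * (y x - f x) ∂D ≤ α)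
    (haudit₀ : ∫ x, S₀.indicator (fun _ => (1 : ℝ)) x * (f x - y x) ∂D ≤ α) :
    ((D[|S]) {x | (if f x > 1/2 then (1 : ℝ) else 0) ≠ y x}).toReal
      ≤ 3 * ((D[|S]) {x | (if f₀ x > 1/2 then (1 : ℝ) else 0) ≠ y x}).toReal + 4 * β := by
  classical
  set s := (D S).toReal with hsdef
  have hs0 : 0 < s := lt_of_lt_of_le hγ hSγ
  -- measurable building blocks
  have hTm : MeasurableSet {x | f x > 1/2} := measurableSet_lt measurable_const hf
  have hT₀m : MeasurableSet {x | f₀ x > 1/2} := measurableSet_lt measurable_const hf₀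
  have hY1 : MeasurableSet {x | y x = 1} := hy (measurableSet_singleton 1)
  have hY0 : MeasurableSet {x | y x = 0} := hy (measurableSet_singleton 0)
  have hS₁m : MeasurableSet S₁ := by rw [hS₁]; exact hS.inter hT₀m
  have hS₀m : MeasurableSet S₀ := hS₀ ▸ hS.diff hS₁m
  set A1 := S₁ ∩ ({x | y x = 1} ∩ {x | f x > 1/2}ᶜ) with hA1
  set B1 := S₁ ∩ {x | y x = 0} with hB1
  set A0 := S₀ ∩ ({x | y x = 0} ∩ {x | f x > 1/2}) with hA0
  set B0 := S₀ ∩ {x | y x = 1} with hB0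
  have hA1m : MeasurableSet A1 := hS₁m.inter (hY1.inter hTm.compl)
  have hB1m : MeasurableSet B1 := hS₁m.inter hY0
  have hA0m : MeasurableSet A0 := hS₀m.inter (hY0.inter hTm)
  have hB0m : MeasurableSet B0 := hS₀m.inter hY1
  have hybd : ∀ x, |y x - f x| ≤ 1 := by
    intro x
    obtain ⟨h0, h1⟩ := hf01 x
    rcases hy01 x with h | h <;> rw [abs_le] <;> constructor <;> linarith
  -- first audit bound
  have bound₁ : (1/2) * (D A1).toReal - (D B1).toReal ≤ α := by
    refine dnh_aux D (fun x => y x - f x) (hy.sub hf) hybd S₁ A1 B1 hS₁m hA1m hB1m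
      ?_ ?_ ?_ Set.inter_subset_left Set.inter_subset_left α haudit₁
    · rintro x ⟨-, hy1, hfx⟩
      obtain ⟨h0, h1⟩ := hf01 x
      have hy1' : y x = 1 := hy1
      have hfx' : ¬ f x > 1/2 := hfx
      show 1/2 ≤ y x - f x
      linarith [not_lt.mp hfx']
    · rintro x ⟨-, hy0⟩
      obtain ⟨h0, h1⟩ := hf01 x
      have hy0' : y x = 0 := hy0
      show -1 ≤ y x - f x
      linarith
    · intro x hxU hxA hxB
      have hy1 : y x = 1 := by
        rcases hy01 x with h | h
        · exact absurd ⟨hxU, h⟩ hxB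
        · exact h
      obtain ⟨h0, h1⟩ := hf01 x
      show 0 ≤ y x - f x
      linarith
  -- second audit bound
  have bound₀ : (1/2) * (D A0).toReal - (D B0).toReal ≤ α := by
    refine dnh_aux D (fun x => f x - y x) (hf.sub hy) (fun x => by rw [abs_sub_comm]; exact hybd x)
      S₀ A0 B0 hS₀m hA0m hB0m ?_ ?_ ?_ Set.inter_subset_left Set.inter_subset_left α haudit₀
    · rintro x ⟨-, hy0, hfx⟩
      have hy0' : y x = 0 := hy0
      have hfx' : f x > 1/2 := hfx
      show 1/2 ≤ f x - y x
      linarith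
    · rintro x ⟨-, hy1⟩
      obtain ⟨h0, h1⟩ := hf01 x
      have hy1' : y x = 1 := hy1
      show -1 ≤ f x - y x
      linarith
    · intro x hxU hxA hxB
      have hy0 : y x = 0 := by
        rcases hy01 x with h | h
        · exact h
        · exact absurd ⟨hxU, h⟩ hxB
      have hfle : ¬ f x > 1/2 := fun hc => hxA ⟨hxU, hy0, hc⟩
      obtain ⟨h0, h1⟩ := hf01 x
      show 0 ≤ f x - y x
      linarith [not_lt.mp hfle]
  set Ef := {x | (if f x > 1/2 then (1 : ℝ) else 0) ≠ y x} with hEf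
  set Ef₀ := {x | (if f₀ x > 1/2 then (1 : ℝ) else 0) ≠ y x} with hEf₀
  have hSsplit : ∀ x ∈ S, x ∈ S₁ ∨ x ∈ S₀ := by
    intro x hx
    by_cases h : x ∈ S₁
    · exact Or.inl h
    · exact Or.inr (hS₀ ▸ ⟨hx, h⟩)
  have hS₁S : S₁ ⊆ S := by rw [hS₁]; rintro x ⟨hx, -⟩; exact hx
  have hS₀S : S₀ ⊆ S := by rw [hS₀]; exact Set.diff_subset
  -- inclusion for f's error set
  have hsub : S ∩ Ef ⊆ A1 ∪ (B1 ∪ (A0 ∪ B0)) := by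
    rintro x ⟨hxS, hxE⟩
    rw [hEf, Set.mem_setOf_eq] at hxE
    rcases hSsplit x hxS with hx1 | hx0
    · rcases hy01 x with h | h
      · exact Or.inr (Or.inl ⟨hx1, h⟩)
      · have hfx : ¬ f x > 1/2 := by
          intro hc; rw [if_pos hc, h] at hxE; exact hxE rfl
        exact Or.inl ⟨hx1, h, hfx⟩
    · rcases hy01 x with h | h
      · have hfx : f x > 1/2 := by
          by_contra hc; rw [if_neg hc, h] at hxE; exact hxE rfl
        exact Or.inr (Or.inr (Or.inl ⟨hx0, h, hfx⟩))
      · exact Or.inr (Or.inr (Or.inr ⟨hx0, h⟩))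
  -- f₀'s error set is exactly B1 ∪ B0
  have hEq : S ∩ Ef₀ = B1 ∪ B0 := by
    ext x
    constructor
    · rintro ⟨hxS, hxE⟩
      rw [hEf₀, Set.mem_setOf_eq] at hxE
      rcases hSsplit x hxS with hx1 | hx0
      · have hf₀x : f₀ x > 1/2 := (hS₁ ▸ hx1 : x ∈ {x | x ∈ S ∧ f₀ x > 1/2}).2
        rw [if_pos hf₀x] at hxE
        have hy0 : y x = 0 := by
          rcases hy01 x with h | h
          · exact h
          · exact absurd h.symm hxE
        exact Or.inl ⟨hx1, hy0⟩
      · have hx0' : x ∈ S \ S₁ := hS₀ ▸ hx0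
        have hf₀x : ¬ f₀ x > 1/2 := by
          intro hc; exact hx0'.2 (hS₁ ▸ (⟨hxS, hc⟩ : x ∈ {x | x ∈ S ∧ f₀ x > 1/2}))
        rw [if_neg hf₀x] at hxE
        have hy1 : y x = 1 := by
          rcases hy01 x with h | h
          · exact absurd h.symm hxE
          · exact h
        exact Or.inr ⟨hx0, hy1⟩
    · rintro (⟨hx1, hy0⟩ | ⟨hx0, hy1⟩)
      · have hf₀x : f₀ x > 1/2 := (hS₁ ▸ hx1 : x ∈ {x | x ∈ S ∧ f₀ x > 1/2}).2
        refine ⟨hS₁S hx1, ?_⟩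
        rw [hEf₀, Set.mem_setOf_eq, if_pos hf₀x, hy0]
        norm_num
      · have hx0' : x ∈ S \ S₁ := hS₀ ▸ hx0
        have hf₀x : ¬ f₀ x > 1/2 := by
          intro hc; exact hx0'.2 (hS₁ ▸ (⟨hx0'.1, hc⟩ : x ∈ {x | x ∈ S ∧ f₀ x > 1/2}))
        refine ⟨hS₀S hx0, ?_⟩
        rw [hEf₀, Set.mem_setOf_eq, if_neg hf₀x, hy1]
        norm_num
  have hdisj : Disjoint B1 B0 := by
    refine Set.disjoint_left.mpr ?_
    rintro x ⟨hx1, -⟩ ⟨hx0, -⟩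
    exact (hS₀ ▸ hx0 : x ∈ S \ S₁).2 hx1
  -- measure arithmetic
  have hEfle : D (S ∩ Ef) ≤ D A1 + (D B1 + (D A0 + D B0)) := by
    refine (measure_mono hsub).trans ?_
    refine (measure_union_le _ _).trans ?_
    gcongr
    refine (measure_union_le _ _).trans ?_
    gcongr
    exact measure_union_le _ _
  have hfin : ∀ t : Set X, D t ≠ ⊤ := fun t => measure_ne_top D t
  have e_le : (D (S ∩ Ef)).toReal ≤
      (D A1).toReal + ((D B1).toReal + ((D A0).toReal + (D B0).toReal)) := by
    have hne3 : D A0 + D B0 ≠ ⊤ := ENNReal.add_ne_top.mpr ⟨hfin _, hfin _⟩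
    have hne2 : D B1 + (D A0 + D B0) ≠ ⊤ := ENNReal.add_ne_top.mpr ⟨hfin _, hne3⟩
    have hne1 : D A1 + (D B1 + (D A0 + D B0)) ≠ ⊤ := ENNReal.add_ne_top.mpr ⟨hfin _, hne2⟩
    have := ENNReal.toReal_mono hne1 hEfle
    rwa [ENNReal.toReal_add (hfin _) hne2, ENNReal.toReal_add (hfin _) hne3,
      ENNReal.toReal_add (hfin _) (hfin _)] at this
  have hEf₀val : (D (S ∩ Ef₀)).toReal = (D B1).toReal + (D B0).toReal := by
    rw [hEq, measure_union hdisj hB0m, ENNReal.toReal_add (hfin _) (hfin _)]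
  -- conclude
  rw [ProbabilityTheory.cond_apply hS, ProbabilityTheory.cond_apply hS,
    ENNReal.toReal_mul, ENNReal.toReal_mul, ENNReal.toReal_inv]
  set e := (D (S ∩ Ef)).toReal
  set e0 := (D (S ∩ Ef₀)).toReal
  have hβγs : β * γ ≤ β * s := mul_le_mul_of_nonneg_left hSγ hβ.le
  have key : e ≤ 3 * e0 + 4 * (β * s) := by
    have ha1 : (0:ℝ) ≤ (D A0).toReal := ENNReal.toReal_nonneg
    have ha2 : (0:ℝ) ≤ (D A1).toReal := ENNReal.toReal_nonneg
    nlinarith [bound₁, bound₀, e_le, hEf₀val]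
  calc s⁻¹ * e ≤ s⁻¹ * (3 * e0 + 4 * (β * s)) :=
        mul_le_mul_of_nonneg_left key (inv_nonneg.mpr hs0.le)
    _ = 3 * (s⁻¹ * e0) + 4 * β := by field_simp
end

section
/- Let T ⊆ X be measurable with D(T) > 0, and let f_0, f : X → [0,1] be measurable hypotheses such that f_0(x) > 1/2 for every x ∈ T. Let τ = er_T(f_0;y) and suppose the conditional expectation E_{x∼T}[y(x) - f(x)] ≤ β_1 for some β_1 ≥ 0. Then er_T(f;y) ≤ 2·β_1 + 3·τ. -/
open MeasureTheory ProbabilityTheory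

/-- On a region `T` where the initial hypothesis `f₀` predicts positively, a bound
on the conditional bias of `f` bounds the classification error of `f` on `T` in
terms of that of `f₀`. -/
theorem error_on_positive_region
    {X : Type*} [MeasurableSpace X] (D : Measure X) [IsProbabilityMeasure D]
    (y f₀ f : X → ℝ) (hy : Measurable y) (hy01 : ∀ x, y x = 0 ∨ y x = 1)
    (hf₀ : Measurable f₀) (hf₀01 : ∀ x, f₀ x ∈ Set.Icc (0 : ℝ) 1)
    (hf : Measurable f) (hf01 : ∀ x, f x ∈ Set.Icc (0 : ℝ) 1)
    (T : Set X) (hT : MeasurableSet T) (hTpos : 0 < D T)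
    (hf₀T : ∀ x ∈ T, f₀ x > 1/2)
    (τ β₁ : ℝ) (hβ₁ : 0 ≤ β₁)
    (hτ : τ = ((D[|T]) {x | (if f₀ x > 1/2 then (1 : ℝ) else 0) ≠ y x}).toReal)
    (hcond : ∫ x, (y x - f x) ∂(D[|T]) ≤ β₁) :
    ((D[|T]) {x | (if f x > 1/2 then (1 : ℝ) else 0) ≠ y x}).toReal ≤ 2 * β₁ + 3 * τ := by
  have hD0 : D T ≠ 0 := hTpos.ne'
  set μ : Measure X := D[|T] with hμdef
  haveI : IsProbabilityMeasure μ := cond_isProbabilityMeasure hD0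
  set A : Set X := {x | y x = 1} ∩ {x | f x ≤ 1/2} with hAdef
  set B : Set X := {x | y x = 0} with hBdef
  have hAm : MeasurableSet A :=
    (hy (measurableSet_singleton 1)).inter (hf measurableSet_Iic)
  have hBm : MeasurableSet B := hy (measurableSet_singleton 0)
  -- τ is the conditional measure of B
  have hτB : τ = (μ B).toReal := by
    have hset : T ∩ {x | (if f₀ x > 1/2 then (1 : ℝ) else 0) ≠ y x} = T ∩ B := by
      ext x
      simp only [Set.mem_inter_iff, Set.mem_setOf_eq, hBdef]
      constructor
      · rintro ⟨hxT, hne⟩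
        refine ⟨hxT, ?_⟩
        rw [if_pos (hf₀T x hxT)] at hne
        rcases hy01 x with h | h
        · exact h
        · exact absurd h.symm hne
      · rintro ⟨hxT, h0⟩
        refine ⟨hxT, ?_⟩
        rw [if_pos (hf₀T x hxT), h0]
        norm_num
    rw [hτ, hμdef, cond_apply hT, cond_apply hT, hset]
  -- pointwise lower bound on y - f
  set g : X → ℝ := fun x => 2⁻¹ * A.indicator (fun _ => (1 : ℝ)) x
      - B.indicator (fun _ => (1 : ℝ)) x with hgdef
  have hg_le : ∀ x, g x ≤ y x - f x := by
    intro x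
    simp only [hgdef, Set.indicator_apply]
    rcases hy01 x with h0 | h1
    · have hxB : x ∈ B := h0
      have hxA : x ∉ A := by
        simp only [hAdef, Set.mem_inter_iff, Set.mem_setOf_eq, h0]
        norm_num
      rw [if_neg hxA, if_pos hxB, h0]
      have := (hf01 x).2
      linarith
    · have hxB : x ∉ B := by simp [hBdef, h1]
      by_cases hxA : x ∈ A
      · rw [if_pos hxA, if_neg hxB, h1]
        have hfx : f x ≤ 1/2 := hxA.2
        linarith
      · rw [if_neg hxA, if_neg hxB, h1]
        have := (hf01 x).2
        linarith
  -- integrability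
  have hyi : Integrable y μ := by
    refine (integrable_const (1 : ℝ)).mono' hy.aestronglyMeasurable ?_
    filter_upwards with x
    rcases hy01 x with h | h <;> simp [h]
  have hfi : Integrable f μ := by
    refine (integrable_const (1 : ℝ)).mono' hf.aestronglyMeasurable ?_
    filter_upwards with x
    rw [Real.norm_eq_abs, abs_le]
    exact ⟨by linarith [(hf01 x).1], (hf01 x).2⟩
  have hAi : Integrable (A.indicator (fun _ => (1 : ℝ))) μ :=
    (integrable_const (1 : ℝ)).indicator hAm
  have hBi : Integrable (B.indicator (fun _ => (1 : ℝ))) μ :=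
    (integrable_const (1 : ℝ)).indicator hBm
  have hgi : Integrable g μ := (hAi.const_mul _).sub hBi
  -- integral of g
  have hgint : ∫ x, g x ∂μ = 2⁻¹ * (μ A).toReal - (μ B).toReal := by
    rw [hgdef]
    rw [integral_sub (hAi.const_mul _) hBi, integral_const_mul,
      integral_indicator_const (1 : ℝ) hAm, integral_indicator_const (1 : ℝ) hBm]
    simp [measureReal_def]
  have hmono : ∫ x, g x ∂μ ≤ ∫ x, (y x - f x) ∂μ :=
    integral_mono hgi (hyi.sub hfi) hg_le
  have hAbound : (μ A).toReal ≤ 2 * β₁ + 2 * τ := by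
    rw [hgint] at hmono
    have := hmono.trans hcond
    rw [hτB]
    linarith
  -- error set bound
  have hsub : {x | (if f x > 1/2 then (1 : ℝ) else 0) ≠ y x} ⊆ A ∪ B := by
    intro x hx
    simp only [Set.mem_setOf_eq] at hx
    rcases hy01 x with h0 | h1
    · exact Or.inr h0
    · left
      refine ⟨h1, ?_⟩
      show f x ≤ 1/2
      by_contra hle
      push_neg at hle
      rw [if_pos hle, h1] at hx
      exact hx rfl
  have hfin : ∀ s : Set X, μ s ≠ ⊤ := fun s => measure_ne_top μ s
  have h1 : (μ {x | (if f x > 1/2 then (1 : ℝ) else 0) ≠ y x}).toReal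
      ≤ (μ (A ∪ B)).toReal :=
    ENNReal.toReal_mono (hfin _) (measure_mono hsub)
  have h2 : (μ (A ∪ B)).toReal ≤ (μ A).toReal + (μ B).toReal := by
    rw [← ENNReal.toReal_add (hfin _) (hfin _)]
    exact ENNReal.toReal_mono (by simp [hfin, ENNReal.add_ne_top]) (measure_union_le A B)
  have := hτB
  calc ((D[|T]) {x | (if f x > 1/2 then (1 : ℝ) else 0) ≠ y x}).toReal
      ≤ (μ A).toReal + (μ B).toReal := le_trans h1 h2
    _ ≤ 2 * β₁ + 3 * τ := by rw [← hτB] at *; linarith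
end

section
/- Let p ∈ (0,1), b ∈ {0,1}, c ∈ ℝ, and η > 0 with |η·c| ≤ 1, and set p' = p·e^{-η·c} / (1 - p + p·e^{-η·c}). Then the cross-entropy loss drop satisfies [−b·log p − (1−b)·log(1−p)] − [−b·log p' − (1−b)·log(1−p')] ≥ η·c·(p − b) − η²·c². -/
lemma exp_le_one_add_add_sq {x : ℝ} (h : |x| ≤ 1) : Real.exp x ≤ 1 + x + x ^ 2 := by
  have hb := Real.exp_bound h (by norm_num : 0 < 3)
  have hsum : ∑ m ∈ Finset.range 3, x ^ m / (Nat.factorial m : ℝ) =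
      1 + x + x ^ 2 / 2 := by
    simp [Finset.sum_range_succ, Nat.factorial]
  rw [hsum] at hb
  have h2 := (abs_le.mp hb).2
  norm_num [Nat.factorial] at h2
  have hx3 : |x| ^ 3 ≤ 1 := by
    calc |x| ^ 3 ≤ 1 ^ 3 := by
          exact pow_le_pow_left₀ (abs_nonneg x) h 3
      _ = 1 := by norm_num
  have hx3' : x ^ 3 ≤ |x| ^ 3 := by
    calc x ^ 3 ≤ |x ^ 3| := le_abs_self _
      _ = |x| ^ 3 := by rw [abs_pow]
  have hxsq : |x| ^ 3 ≤ x ^ 2 := by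
    calc |x| ^ 3 = |x| ^ 2 * |x| := by ring
      _ ≤ |x| ^ 2 * 1 := by nlinarith [abs_nonneg x, sq_nonneg (|x|)]
      _ = x ^ 2 := by rw [mul_one, sq_abs]
  nlinarith [hx3, hx3', hxsq]

/-- Pointwise progress of the multiplicative-weights update: the drop in
cross-entropy loss is at least `η·c·(p − b) − η²·c²`. -/
theorem mw_pointwise_progress
    (p b c η : ℝ) (hp : p ∈ Set.Ioo (0 : ℝ) 1) (hb : b = 0 ∨ b = 1)
    (hη : 0 < η) (hηc : |η * c| ≤ 1)
    (p' : ℝ)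
    (hp' : p' = p * Real.exp (-η * c) / (1 - p + p * Real.exp (-η * c))) :
    (-b * Real.log p - (1 - b) * Real.log (1 - p))
      - (-b * Real.log p' - (1 - b) * Real.log (1 - p'))
      ≥ η * c * (p - b) - η^2 * c^2 := by
  obtain ⟨hp0, hp1⟩ := hp
  set x : ℝ := η * c with hxdef
  have hE : Real.exp (-η * c) = Real.exp (-x) := by rw [hxdef]; ring_nf
  have hEpos : 0 < Real.exp (-η * c) := Real.exp_pos _
  have hD : 0 < 1 - p + p * Real.exp (-η * c) := by nlinarith
  set D : ℝ := 1 - p + p * Real.exp (-η * c) with hDdef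
  -- key inequality: log D ≤ x² - x p
  have hxabs : |(-x)| ≤ 1 := by rw [abs_neg]; exact hηc
  have hexp : Real.exp (-x) ≤ 1 + (-x) + (-x) ^ 2 := exp_le_one_add_add_sq hxabs
  have hlogD : Real.log D ≤ D - 1 := Real.log_le_sub_one_of_pos hD
  have hkey : Real.log D ≤ x ^ 2 - x * p := by
    have hDle : D - 1 ≤ x ^ 2 - x * p := by
      have : Real.exp (-η * c) ≤ 1 - x + x ^ 2 := by rw [hE]; nlinarith [hexp]
      nlinarith [hp0.le, hp1.le, sq_nonneg x]
    linarith
  -- log of p' and 1 - p'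
  have hlogp' : Real.log p' = Real.log p + (-x) - Real.log D := by
    rw [hp', Real.log_div (by positivity) (ne_of_gt hD),
      Real.log_mul (ne_of_gt hp0) (ne_of_gt hEpos), hE, Real.log_exp]
  have h1p' : 1 - p' = (1 - p) / D := by
    rw [hp']; field_simp; rw [hDdef, neg_mul]; ring
  have hlog1p' : Real.log (1 - p') = Real.log (1 - p) - Real.log D := by
    rw [h1p', Real.log_div (by linarith) (ne_of_gt hD)]
  have hsq : η ^ 2 * c ^ 2 = x ^ 2 := by rw [hxdef]; ring
  rcases hb with rfl | rfl
  · simp only [neg_zero, zero_mul, sub_zero, one_mul, hlog1p']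
    rw [hsq]
    nlinarith [hkey]
  · simp only [hlogp']
    rw [hsq]
    nlinarith [hkey]
end

section
/- Let α ∈ (0,1] and η = α/4. Suppose f_0, f_1, …, f_T : X → (0,1) is a sequence of measurable hypotheses such that ℓ_D(f_0;y) is finite and, for each t < T, f_{t+1} is the multiplicative-weights update of f_t by some measurable c_t : X → [−1,1] with step η satisfying E[c_t(x)·(f_t(x) − y(x))] ≥ α/2 (with ℓ_D(f_t;y) finite for each t). Then T ≤ 16·ℓ_D(f_0;y)/α². -/
open MeasureTheory

lemma exp_quad_aux {z : ℝ} (hz : |z| ≤ 1) : Real.exp z ≤ 1 + z + z ^ 2 := by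
  have h := Real.exp_bound hz (n := 2) (by norm_num)
  have hsum : ∑ m ∈ Finset.range 2, z ^ m / m.factorial = 1 + z := by
    simp [Finset.sum_range_succ]
  rw [hsum] at h
  norm_num [Nat.factorial] at h
  have h1 := (abs_sub_le_iff.1 h).1
  have h2 : |z| ^ 2 = z ^ 2 := sq_abs z
  nlinarith [sq_nonneg z]

lemma ptw_bound_aux (η a b yv : ℝ) (ha : 0 < a) (ha1 : a < 1)
    (hb : b ∈ Set.Icc (-1 : ℝ) 1) (hyv : yv = 0 ∨ yv = 1)
    (hη0 : 0 < η) (hη1 : η ≤ 1) :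
    -(yv) * Real.log (a * Real.exp (-η * b) / (1 - a + a * Real.exp (-η * b)))
      - (1 - yv) * Real.log (1 - a * Real.exp (-η * b) / (1 - a + a * Real.exp (-η * b)))
    ≤ (-(yv) * Real.log a - (1 - yv) * Real.log (1 - a))
        + (-η * (b * (a - yv)) + η ^ 2) := by
  obtain ⟨hb1, hb2⟩ := hb
  set E := Real.exp (-η * b) with hE
  have hEpos : 0 < E := Real.exp_pos _
  set Z := 1 - a + a * E with hZ
  have hZpos : 0 < Z := by nlinarith
  have hfl : Real.log (a * E / Z) = Real.log a + (-η * b) - Real.log Z := by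
    rw [Real.log_div (by positivity) (ne_of_gt hZpos), Real.log_mul (ne_of_gt ha) (ne_of_gt hEpos),
      hE, Real.log_exp]
  have hone : 1 - a * E / Z = (1 - a) / Z := by
    field_simp
    ring
  have hfl2 : Real.log (1 - a * E / Z) = Real.log (1 - a) - Real.log Z := by
    rw [hone, Real.log_div (by linarith) (ne_of_gt hZpos)]
  have hzabs : |(-η * b)| ≤ 1 := by
    rw [abs_mul, abs_neg]
    have : |η| ≤ 1 := by rw [abs_of_pos hη0]; exact hη1
    have : |b| ≤ 1 := abs_le.2 ⟨hb1, hb2⟩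
    nlinarith [abs_nonneg η, abs_nonneg b, abs_of_pos hη0]
  have hEle : E ≤ 1 + (-η * b) + (-η * b) ^ 2 := exp_quad_aux hzabs
  have hlogZ : Real.log Z ≤ -η * b * a + η ^ 2 := by
    have h1 : Real.log Z ≤ Z - 1 := Real.log_le_sub_one_of_pos hZpos
    have h2 : Z - 1 = a * (E - 1) := by rw [hZ]; ring
    have hb2' : b ^ 2 ≤ 1 := by nlinarith
    have h3 : a * (η ^ 2 * b ^ 2) ≤ η ^ 2 := by nlinarith [sq_nonneg η]
    nlinarith [mul_le_mul_of_nonneg_left hEle ha.le]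
  rw [hfl, hfl2]
  rcases hyv with h | h <;> subst h <;> nlinarith

/-- Convergence of Multiaccuracy Boost: if every update has correlation at least
`α/2` with the residual, the number of iterations is at most `16·ℓ_D(f₀;y)/α²`. -/
theorem mw_convergence_iterations
    {X : Type*} [MeasurableSpace X] (D : Measure X) [IsProbabilityMeasure D]
    (y : X → ℝ) (hy : Measurable y) (hy01 : ∀ x, y x = 0 ∨ y x = 1)
    (α η : ℝ) (hα : α ∈ Set.Ioc (0 : ℝ) 1) (hη : η = α / 4)
    (T : ℕ) (f : ℕ → X → ℝ) (c : ℕ → X → ℝ)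
    (hfm : ∀ t ≤ T, Measurable (f t))
    (hf01 : ∀ t ≤ T, ∀ x, f t x ∈ Set.Ioo (0 : ℝ) 1)
    (hℓ : ∀ t ≤ T,
      Integrable (fun x => -(y x) * Real.log (f t x) - (1 - y x) * Real.log (1 - f t x)) D)
    (hcm : ∀ t < T, Measurable (c t))
    (hc1 : ∀ t < T, ∀ x, c t x ∈ Set.Icc (-1 : ℝ) 1)
    (hupd : ∀ t < T, ∀ x,
      f (t + 1) x = f t x * Real.exp (-η * c t x) / (1 - f t x + f t x * Real.exp (-η * c t x)))
    (hcorr : ∀ t < T, ∫ x, c t x * (f t x - y x) ∂D ≥ α / 2) :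
    (T : ℝ) ≤ 16 * (∫ x, (-(y x) * Real.log (f 0 x) - (1 - y x) * Real.log (1 - f 0 x)) ∂D) / α^2 := by
  obtain ⟨hα0, hα1⟩ := hα
  have hη0 : 0 < η := by rw [hη]; linarith
  have hη1 : η ≤ 1 := by rw [hη]; linarith
  set L : ℕ → ℝ :=
    fun t => ∫ x, (-(y x) * Real.log (f t x) - (1 - y x) * Real.log (1 - f t x)) ∂D with hL
  have hstep : ∀ t < T, L (t + 1) ≤ L t - α ^ 2 / 16 := by
    intro t ht
    have ht' : t ≤ T := ht.le
    have ht1 : t + 1 ≤ T := ht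
    have hptw : ∀ x,
        -(y x) * Real.log (f (t + 1) x) - (1 - y x) * Real.log (1 - f (t + 1) x)
        ≤ (-(y x) * Real.log (f t x) - (1 - y x) * Real.log (1 - f t x))
            + (-η * (c t x * (f t x - y x)) + η ^ 2) := by
      intro x
      rw [hupd t ht x]
      exact ptw_bound_aux η (f t x) (c t x) (y x) (hf01 t ht' x).1 (hf01 t ht' x).2
        (hc1 t ht x) (hy01 x) hη0 hη1
    have hcint : Integrable (fun x => c t x * (f t x - y x)) D := by
      refine ⟨(((hcm t ht).mul ((hfm t ht').sub hy)).aestronglyMeasurable), ?_⟩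
      refine HasFiniteIntegral.of_bounded (C := 1) (Filter.Eventually.of_forall fun x => ?_)
      have h1 := hc1 t ht x
      have h2 := hf01 t ht' x
      rcases hy01 x with h | h <;>
        · rw [Real.norm_eq_abs, abs_mul, h]
          have : |c t x| ≤ 1 := abs_le.2 ⟨h1.1, h1.2⟩
          have : |f t x - (0:ℝ)| ≤ 1 ∧ |f t x - (1:ℝ)| ≤ 1 := by
            constructor <;> rw [abs_le] <;> constructor <;> simp <;> linarith [h2.1, h2.2]
          nlinarith [abs_nonneg (c t x), abs_nonneg (f t x - y x), this.1, this.2,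
            abs_le.2 ⟨h1.1, h1.2⟩]
    have hint2 : Integrable (fun x => -η * (c t x * (f t x - y x)) + η ^ 2) D :=
      (hcint.const_mul (-η)).add (integrable_const _)
    have hmono : L (t + 1) ≤ ∫ x, ((-(y x) * Real.log (f t x) - (1 - y x) * Real.log (1 - f t x))
        + (-η * (c t x * (f t x - y x)) + η ^ 2)) ∂D :=
      integral_mono (hℓ (t + 1) ht1) ((hℓ t ht').add hint2) hptw
    have heq : ∫ x, ((-(y x) * Real.log (f t x) - (1 - y x) * Real.log (1 - f t x))
        + (-η * (c t x * (f t x - y x)) + η ^ 2)) ∂D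
        = L t + (-η * ∫ x, c t x * (f t x - y x) ∂D + η ^ 2) := by
      rw [integral_add (hℓ t ht') hint2, integral_add (hcint.const_mul (-η)) (integrable_const _),
        integral_const_mul, integral_const]
      simp only [measure_univ, probReal_univ, ENNReal.toReal_one, smul_eq_mul, one_mul, hL, neg_mul]
    rw [heq] at hmono
    have hc := hcorr t ht
    have : -η * ∫ x, c t x * (f t x - y x) ∂D ≤ -η * (α / 2) := by
      apply neg_le_neg at hc
      nlinarith
    have hη2 : -η * (α / 2) + η ^ 2 = -(α ^ 2 / 16) := by rw [hη]; ring
    nlinarith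
  have hdesc : ∀ k, k ≤ T → L k ≤ L 0 - k * (α ^ 2 / 16) := by
    intro k
    induction k with
    | zero => intro _; simp
    | succ n ih =>
      intro h
      have h1 := hstep n (by omega)
      have h2 := ih (by omega)
      push_cast
      linarith
  have hLT : 0 ≤ L T := by
    refine integral_nonneg fun x => ?_
    have h2 := hf01 T le_rfl x
    have hlog1 : Real.log (f T x) ≤ 0 := Real.log_nonpos h2.1.le h2.2.le
    have hlog2 : Real.log (1 - f T x) ≤ 0 :=
      Real.log_nonpos (by linarith [h2.2]) (by linarith [h2.1])
    simp only [Pi.zero_apply]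
    rcases hy01 x with h | h <;> rw [h] <;> nlinarith
  have hfin := hdesc T le_rfl
  rw [le_div_iff₀ (by positivity)]
  nlinarith
end

section
/- Let f : X → (0,1) and h : X → ℝ be measurable, define g(x) = 1/(1 − f(x) − y(x)), and suppose g², h², and (f−y)² are D-integrable with E[(f(x) − y(x))²] > 0 and E[g(x)·(f(x) − y(x))] ≥ 0. If E[(h(x) − g(x))²] ≤ E[g(x)·(f(x) − y(x))]² / (2·E[(f(x) − y(x))²]), then E[h(x)·(f(x) − y(x))] ≥ (1/4)·ℓ_D(f;y). -/
open MeasureTheory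

private lemma integrable_mul_of_sq {X : Type*} [MeasurableSpace X] {D : Measure X}
    {u v : X → ℝ} (hu : AEStronglyMeasurable u D) (hv : AEStronglyMeasurable v D)
    (hu2 : Integrable (fun x => (u x)^2) D) (hv2 : Integrable (fun x => (v x)^2) D) :
    Integrable (fun x => u x * v x) D := by
  refine Integrable.mono' (hu2.add hv2) (hu.mul hv) ?_
  filter_upwards with x
  simp only [Pi.add_apply]
  rw [Real.norm_eq_abs, abs_mul]
  nlinarith [sq_nonneg (|u x| - |v x|), sq_abs (u x), sq_abs (v x), abs_nonneg (u x),
    abs_nonneg (v x)]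

private lemma integral_cauchy_schwarz {X : Type*} [MeasurableSpace X] {D : Measure X}
    {u v : X → ℝ} (hu : AEStronglyMeasurable u D) (hv : AEStronglyMeasurable v D)
    (hu2 : Integrable (fun x => (u x)^2) D) (hv2 : Integrable (fun x => (v x)^2) D) :
    (∫ x, u x * v x ∂D)^2 ≤ (∫ x, (u x)^2 ∂D) * (∫ x, (v x)^2 ∂D) := by
  have huv : Integrable (fun x => u x * v x) D := integrable_mul_of_sq hu hv hu2 hv2
  have key : ∀ t : ℝ, 0 ≤ (∫ x, (v x)^2 ∂D) * t^2 + (2 * ∫ x, u x * v x ∂D) * t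
      + (∫ x, (u x)^2 ∂D) := by
    intro t
    have h1 : Integrable (fun x => (v x)^2 * t^2 + (2 * (u x * v x)) * t) D :=
      (hv2.mul_const _).add ((huv.const_mul 2).mul_const t)
    have h2 : ∀ x, (0:ℝ) ≤ (v x)^2 * t^2 + (2 * (u x * v x)) * t + (u x)^2 := by
      intro x; nlinarith [sq_nonneg (t * v x + u x)]
    calc (0:ℝ) ≤ ∫ x, ((v x)^2 * t^2 + (2 * (u x * v x)) * t + (u x)^2) ∂D :=
          integral_nonneg h2
      _ = (∫ x, (v x)^2 ∂D) * t^2 + (2 * ∫ x, u x * v x ∂D) * t + (∫ x, (u x)^2 ∂D) := by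
          rw [integral_add h1 hu2, integral_add (hv2.mul_const _) ((huv.const_mul 2).mul_const t),
            integral_mul_const, integral_mul_const, integral_const_mul]
  have hd : discrim (∫ x, (v x)^2 ∂D) (2 * ∫ x, u x * v x ∂D) (∫ x, (u x)^2 ∂D) ≤ 0 :=
    discrim_le_zero (fun t => by simpa [sq] using key t)
  rw [discrim] at hd
  nlinarith [hd]

/-- If `h` approximates the cross-entropy gradient `g` well enough, then the
correlation of `h` with the residual is at least a quarter of the expected
cross-entropy loss. -/
theorem approx_gradient_correlation_loss
    {X : Type*} [MeasurableSpace X] (D : Measure X) [IsProbabilityMeasure D]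
    (y f h : X → ℝ) (hy : Measurable y) (hy01 : ∀ x, y x = 0 ∨ y x = 1)
    (hf : Measurable f) (hf01 : ∀ x, f x ∈ Set.Ioo (0 : ℝ) 1)
    (hh : Measurable h)
    (g : X → ℝ) (hg : ∀ x, g x = 1 / (1 - f x - y x))
    (hg2 : Integrable (fun x => (g x)^2) D)
    (hh2 : Integrable (fun x => (h x)^2) D)
    (hr2 : Integrable (fun x => (f x - y x)^2) D)
    (hrpos : 0 < ∫ x, (f x - y x)^2 ∂D)
    (hgr : 0 ≤ ∫ x, g x * (f x - y x) ∂D)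
    (hclose : ∫ x, (h x - g x)^2 ∂D
      ≤ (∫ x, g x * (f x - y x) ∂D)^2 / (2 * ∫ x, (f x - y x)^2 ∂D)) :
    ∫ x, h x * (f x - y x) ∂D
      ≥ (1/4) * ∫ x, (-(y x) * Real.log (f x) - (1 - y x) * Real.log (1 - f x)) ∂D := by
  -- measurability
  have hgm : Measurable g := by
    have : g = fun x => (1 - f x - y x)⁻¹ := by
      funext x; rw [hg x, one_div]
    rw [this]
    exact ((measurable_const.sub hf).sub hy).inv
  have hrm : Measurable (fun x => f x - y x) := hf.sub hy
  have hdm : Measurable (fun x => h x - g x) := hh.sub hgm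
  -- integrability
  have hd2 : Integrable (fun x => (h x - g x)^2) D := by
    refine Integrable.mono' ((hh2.const_mul 2).add (hg2.const_mul 2))
      ((hdm.pow_const 2).aestronglyMeasurable) ?_
    filter_upwards with x
    simp only [Pi.add_apply]
    rw [Real.norm_eq_abs, abs_of_nonneg (sq_nonneg _)]
    nlinarith [sq_nonneg (h x + g x)]
  have hgrI : Integrable (fun x => g x * (f x - y x)) D :=
    integrable_mul_of_sq hgm.aestronglyMeasurable hrm.aestronglyMeasurable hg2 hr2
  have hhrI : Integrable (fun x => h x * (f x - y x)) D :=
    integrable_mul_of_sq hh.aestronglyMeasurable hrm.aestronglyMeasurable hh2 hr2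
  have hdrI : Integrable (fun x => (h x - g x) * (f x - y x)) D :=
    integrable_mul_of_sq hdm.aestronglyMeasurable hrm.aestronglyMeasurable hd2 hr2
  set A := ∫ x, g x * (f x - y x) ∂D with hA
  set R := ∫ x, (f x - y x)^2 ∂D with hR
  set C := ∫ x, (h x - g x) * (f x - y x) ∂D with hC
  -- pointwise loss bounds
  have hpt : ∀ x, 0 ≤ -(y x) * Real.log (f x) - (1 - y x) * Real.log (1 - f x) ∧
      -(y x) * Real.log (f x) - (1 - y x) * Real.log (1 - f x) ≤ g x * (f x - y x) := by
    intro x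
    obtain ⟨hf0, hf1⟩ := hf01 x
    rcases hy01 x with h0 | h1
    · rw [h0]
      have h1f : (0:ℝ) < 1 - f x := by linarith
      have hlog := Real.log_le_sub_one_of_pos (x := 1 / (1 - f x)) (by positivity)
      rw [Real.log_div one_ne_zero (by linarith), Real.log_one] at hlog
      have hlognp : Real.log (1 - f x) ≤ 0 := Real.log_nonpos (by linarith) (by linarith)
      constructor
      · nlinarith
      · rw [hg x, h0]
        have heq : 1 / (1 - f x - 0) * (f x - 0) = f x / (1 - f x) := by
          rw [sub_zero, sub_zero, one_div_mul_eq_div]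
        rw [heq]
        have : 1 / (1 - f x) - 1 = f x / (1 - f x) := by field_simp; ring
        nlinarith
    · rw [h1]
      have hlog := Real.log_le_sub_one_of_pos (x := 1 / f x) (by positivity)
      rw [Real.log_div one_ne_zero (ne_of_gt hf0), Real.log_one] at hlog
      have hlognp : Real.log (f x) ≤ 0 := Real.log_nonpos (by linarith) (by linarith)
      constructor
      · nlinarith
      · rw [hg x, h1]
        have heq : 1 / (1 - f x - 1) * (f x - 1) = (1 - f x) / f x := by
          have hne : f x ≠ 0 := ne_of_gt hf0
          rw [show (1:ℝ) - f x - 1 = -(f x) by ring, one_div, inv_neg, neg_mul,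
            ← inv_mul_eq_div (a := f x), mul_comm ((f x)⁻¹)]
          rw [mul_comm]
          ring_nf
        rw [heq]
        have : 1 / f x - 1 = (1 - f x) / f x := by field_simp
        nlinarith
  -- loss integrable and bounded by A
  have hlm : Measurable (fun x => -(y x) * Real.log (f x) - (1 - y x) * Real.log (1 - f x)) :=
    ((hy.neg).mul (Real.measurable_log.comp hf)).sub
      ((measurable_const.sub hy).mul (Real.measurable_log.comp (measurable_const.sub hf)))
  have hlI : Integrable (fun x => -(y x) * Real.log (f x) - (1 - y x) * Real.log (1 - f x)) D := by
    refine Integrable.mono' hgrI hlm.aestronglyMeasurable ?_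
    filter_upwards with x
    obtain ⟨h0, h1⟩ := hpt x
    rw [Real.norm_eq_abs, abs_of_nonneg h0]
    exact h1
  have hLA : ∫ x, (-(y x) * Real.log (f x) - (1 - y x) * Real.log (1 - f x)) ∂D ≤ A :=
    integral_mono hlI hgrI (fun x => (hpt x).2)
  -- Cauchy-Schwarz
  have hcs : C^2 ≤ (∫ x, (h x - g x)^2 ∂D) * R :=
    integral_cauchy_schwarz hdm.aestronglyMeasurable hrm.aestronglyMeasurable hd2 hr2
  have hC2 : C^2 ≤ A^2 / 2 := by
    have h1 : (∫ x, (h x - g x)^2 ∂D) * R ≤ (A^2 / (2 * R)) * R :=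
      mul_le_mul_of_nonneg_right hclose (le_of_lt hrpos)
    have h2 : (A^2 / (2 * R)) * R = A^2 / 2 := by
      field_simp
    linarith [hcs, h1.trans_eq h2]
  have hCge : C ≥ -(3/4) * A := by
    nlinarith [sq_nonneg (C + (3/4) * A), sq_nonneg A]
  -- combine
  have hsplit : ∫ x, h x * (f x - y x) ∂D = A + C := by
    have : (fun x => (h x - g x) * (f x - y x)) =
        fun x => h x * (f x - y x) - g x * (f x - y x) := by
      funext x; ring
    rw [hC, this, integral_sub hhrI hgrI] at *
    linarith [hC]
  have : ∫ x, h x * (f x - y x) ∂D ≥ (1/4) * A := by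
    rw [hsplit]; linarith
  linarith [hLA, this]
end

section
/- Let L > 0 and η = 1/(8L). Let f : X → (0,1) and h : X → ℝ be measurable with |η·h(x)| ≤ 1 for all x, with ℓ_D(f;y) finite, with E[h(x)²] ≤ L·ℓ_D(f;y), and with E[h(x)·(f(x) − y(x))] ≥ (1/4)·ℓ_D(f;y). Let f' be the multiplicative-weights update of f by h with step η, and assume ℓ_D(f';y) is finite. Then ℓ_D(f';y) ≤ (1 − 1/(64L))·ℓ_D(f;y). -/
open MeasureTheory

lemma exp_le_quad {x : ℝ} (hx : |x| ≤ 1) : Real.exp x ≤ 1 + x + x^2 := by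
  have h := Real.exp_bound hx (n := 3) (by norm_num)
  have h2 : |x|^3 ≤ x^2 := by
    have : |x|^3 ≤ |x|^2 := pow_le_pow_of_le_one (abs_nonneg x) hx (by norm_num)
    simpa [sq_abs] using this
  have h3 := (abs_le.mp h).2
  simp [Finset.sum_range_succ, Nat.factorial] at h3
  nlinarith

lemma mw_pointwise {t f y : ℝ} (hf : f ∈ Set.Ioo (0:ℝ) 1) (hy : y = 0 ∨ y = 1)
    (ht : |t| ≤ 1) :
    -y * Real.log (f * Real.exp (-t) / (1 - f + f * Real.exp (-t)))
      - (1 - y) * Real.log (1 - f * Real.exp (-t) / (1 - f + f * Real.exp (-t)))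
    ≤ (-y * Real.log f - (1 - y) * Real.log (1 - f)) - t * (f - y) + t^2 := by
  obtain ⟨hf0, hf1⟩ := hf
  have he : 0 < Real.exp (-t) := Real.exp_pos _
  have hZ : 0 < 1 - f + f * Real.exp (-t) := by nlinarith
  set Z := 1 - f + f * Real.exp (-t) with hZdef
  have hlog1 : Real.log (f * Real.exp (-t) / Z)
      = Real.log f + (-t) - Real.log Z := by
    rw [Real.log_div (by positivity) (ne_of_gt hZ), Real.log_mul (ne_of_gt hf0) (ne_of_gt he),
      Real.log_exp]
  have h1f' : 1 - f * Real.exp (-t) / Z = (1 - f) / Z := by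
    field_simp
    ring
  have hlog2 : Real.log (1 - f * Real.exp (-t) / Z) = Real.log (1 - f) - Real.log Z := by
    rw [h1f', Real.log_div (by linarith) (ne_of_gt hZ)]
  rw [hlog1, hlog2]
  have hlogZ : Real.log Z ≤ -(f * t) + t^2 := by
    have h1 : Real.log Z ≤ Z - 1 := Real.log_le_sub_one_of_pos hZ
    have h2 : Real.exp (-t) ≤ 1 + (-t) + t^2 := by
      have := exp_le_quad (x := -t) (by simpa using ht)
      simpa using this
    nlinarith
  rcases hy with hy | hy <;> subst hy <;> nlinarith

/-- One step of the multiplicative-weights update with a learned gradient shrinks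
the expected cross-entropy loss by a factor `1 - 1/(64L)`. -/
theorem mw_gradient_step_contraction
    {X : Type*} [MeasurableSpace X] (D : Measure X) [IsProbabilityMeasure D]
    (y : X → ℝ) (hy : Measurable y) (hy01 : ∀ x, y x = 0 ∨ y x = 1)
    (L η : ℝ) (hL : 0 < L) (hη : η = 1 / (8 * L))
    (f h : X → ℝ) (hf : Measurable f) (hf01 : ∀ x, f x ∈ Set.Ioo (0 : ℝ) 1)
    (hh : Measurable h) (hηh : ∀ x, |η * h x| ≤ 1)
    (hℓf : Integrable (fun x => -(y x) * Real.log (f x) - (1 - y x) * Real.log (1 - f x)) D)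
    (hh2 : ∫ x, (h x)^2 ∂D
      ≤ L * ∫ x, (-(y x) * Real.log (f x) - (1 - y x) * Real.log (1 - f x)) ∂D)
    (hcorr : ∫ x, h x * (f x - y x) ∂D
      ≥ (1/4) * ∫ x, (-(y x) * Real.log (f x) - (1 - y x) * Real.log (1 - f x)) ∂D)
    (f' : X → ℝ)
    (hf' : ∀ x, f' x = f x * Real.exp (-η * h x) / (1 - f x + f x * Real.exp (-η * h x)))
    (hℓf' : Integrable (fun x => -(y x) * Real.log (f' x) - (1 - y x) * Real.log (1 - f' x)) D) :
    ∫ x, (-(y x) * Real.log (f' x) - (1 - y x) * Real.log (1 - f' x)) ∂D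
      ≤ (1 - 1 / (64 * L))
        * ∫ x, (-(y x) * Real.log (f x) - (1 - y x) * Real.log (1 - f x)) ∂D := by
  have hηpos : 0 < η := by rw [hη]; positivity
  -- integrability of bounded functions
  have hbd : ∀ x, |h x| ≤ 1 / η := fun x => by
    have := hηh x
    rw [abs_mul, abs_of_pos hηpos] at this
    rw [le_div_iff₀ hηpos]
    nlinarith
  have hint2 : Integrable (fun x => (h x)^2) D := by
    refine Integrable.mono' (integrable_const ((1/η)^2)) ((hh.pow_const 2).aestronglyMeasurable)
      (Filter.Eventually.of_forall fun x => ?_)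
    rw [Real.norm_eq_abs, abs_of_nonneg (sq_nonneg _)]
    calc (h x)^2 = |h x|^2 := (sq_abs _).symm
    _ ≤ (1/η)^2 := pow_le_pow_left₀ (abs_nonneg _) (hbd x) 2
  have hintc : Integrable (fun x => h x * (f x - y x)) D := by
    refine Integrable.mono' (integrable_const (1/η)) ((hh.mul (hf.sub hy)).aestronglyMeasurable)
      (Filter.Eventually.of_forall fun x => ?_)
    rw [Real.norm_eq_abs, abs_mul]
    have h1 : |f x - y x| ≤ 1 := by
      obtain ⟨a, b⟩ := hf01 x
      rcases hy01 x with hx | hx <;> rw [hx, abs_le] <;> constructor <;> linarith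
    calc |h x| * |f x - y x| ≤ (1/η) * 1 := by
          exact mul_le_mul (hbd x) h1 (abs_nonneg _) (by positivity)
      _ = 1/η := by ring
  -- pointwise bound and integral_mono
  set ℓ := fun x => -(y x) * Real.log (f x) - (1 - y x) * Real.log (1 - f x) with hℓ
  have hg : Integrable (fun x => ℓ x - η * (h x * (f x - y x)) + η^2 * (h x)^2) D :=
    (hℓf.sub (hintc.const_mul η)).add (hint2.const_mul (η^2))
  have hmono : ∫ x, (-(y x) * Real.log (f' x) - (1 - y x) * Real.log (1 - f' x)) ∂D
      ≤ ∫ x, (ℓ x - η * (h x * (f x - y x)) + η^2 * (h x)^2) ∂D := by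
    refine integral_mono hℓf' hg fun x => ?_
    have := mw_pointwise (t := η * h x) (hf01 x) (hy01 x) (hηh x)
    rw [hf' x]
    have hrw : -η * h x = -(η * h x) := by ring
    rw [hrw]
    simp only [hℓ]
    nlinarith [this]
  have hsplit : ∫ x, (ℓ x - η * (h x * (f x - y x)) + η^2 * (h x)^2) ∂D
      = ∫ x, ℓ x ∂D - η * ∫ x, h x * (f x - y x) ∂D + η^2 * ∫ x, (h x)^2 ∂D := by
    have A : ∫ x, (ℓ x - η * (h x * (f x - y x)) + η^2 * (h x)^2) ∂D
        = ∫ x, (ℓ x - η * (h x * (f x - y x))) ∂D + ∫ x, η^2 * (h x)^2 ∂D :=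
      integral_add (hℓf.sub (hintc.const_mul η)) (hint2.const_mul (η^2))
    have B : ∫ x, (ℓ x - η * (h x * (f x - y x))) ∂D
        = ∫ x, ℓ x ∂D - ∫ x, η * (h x * (f x - y x)) ∂D :=
      integral_sub hℓf (hintc.const_mul η)
    rw [A, B, MeasureTheory.integral_const_mul, MeasureTheory.integral_const_mul]
  have key : ∫ x, ℓ x ∂D - η * ∫ x, h x * (f x - y x) ∂D + η^2 * ∫ x, (h x)^2 ∂D
      ≤ (1 - 1 / (64 * L)) * ∫ x, ℓ x ∂D := by
    have h1 : η * ((1/4) * ∫ x, ℓ x ∂D) ≤ η * ∫ x, h x * (f x - y x) ∂D :=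
      mul_le_mul_of_nonneg_left hcorr (le_of_lt hηpos)
    have h2 : η^2 * ∫ x, (h x)^2 ∂D ≤ η^2 * (L * ∫ x, ℓ x ∂D) :=
      mul_le_mul_of_nonneg_left hh2 (sq_nonneg _)
    have hηval : η = 1/(8*L) := hη
    have : (1 : ℝ) - η/4 + η^2*L = 1 - 1/(64*L) := by
      rw [hηval]; field_simp; ring
    calc ∫ x, ℓ x ∂D - η * ∫ x, h x * (f x - y x) ∂D + η^2 * ∫ x, (h x)^2 ∂D
        ≤ ∫ x, ℓ x ∂D - η * ((1/4) * ∫ x, ℓ x ∂D) + η^2 * (L * ∫ x, ℓ x ∂D) := by linarith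
      _ = (1 - η/4 + η^2*L) * ∫ x, ℓ x ∂D := by ring
      _ = (1 - 1/(64*L)) * ∫ x, ℓ x ∂D := by rw [this]
  calc _ ≤ _ := hmono
    _ = _ := hsplit
    _ ≤ _ := key
end
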